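/- For all t > 0, −(m−1)·h''(t)/h(t) − n·f''(t)/f(t) ≥ 0. (This is the nonnegativity of the radial Ricci curvature Ric(∂t,∂t) of the doubly warped metric dt² + h(t)²·ds²_{m−1} + f(t)²·g in the Sha–Yang construction; it reduces to the arithmetic inequality (m−1)(α+1) ≥ n for α = 2(n−1)/m.) -/
import Mathlib


/-- Nonnegativity of the radial Ricci curvature `Ric(∂t,∂t)` of the doubly warped
metric `dt² + h(t)²·ds²_{m−1} + f(t)²·g`: for all `t > 0`,
`−(m−1)·h''(t)/h(t) − n·f''(t)/f(t) ≥ 0`. -/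
theorem shaYang_Ric_radial_nonneg (n m : ℕ) (hn : 2 ≤ n) (hm : 2 ≤ m)
    (α : ℝ) (hα : α = 2 * ((n : ℝ) - 1) / (m : ℝ))
    (f : ℝ → ℝ) (hf : ContDiff ℝ 3 f)
    (hf0 : f 0 = 1) (hf'0 : deriv f 0 = 0)
    (hfpos : ∀ t ≥ (0 : ℝ), 0 < f t)
    (hode : ∀ t ≥ (0 : ℝ), deriv (deriv f) t = (α / 2) * (f t) ^ (-α - 1))
    (h : ℝ → ℝ) (hh : h = fun t => (2 / α) * deriv f t) :
    ∀ t > (0 : ℝ),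
      0 ≤ -((m : ℝ) - 1) * deriv (deriv h) t / h t
          - (n : ℝ) * deriv (deriv f) t / f t := by
  have hm1 : (1:ℝ) ≤ (m:ℝ) := by exact_mod_cast Nat.one_le_of_lt hm
  have hmpos : (0:ℝ) < (m:ℝ) := by positivity
  have hn1 : (1:ℝ) < (n:ℝ) := by exact_mod_cast hn
  have hαpos : 0 < α := by
    have h1 : (0:ℝ) < (n:ℝ) - 1 := by linarith
    rw [hα]; positivity
  have hαne : α ≠ 0 := ne_of_gt hαpos
  -- differentiability facts
  have hf3 : ContDiff ℝ ((2:ℕ) + 1) f := by exact_mod_cast hf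
  have hdf : Differentiable ℝ f := hf.differentiable (by norm_num)
  have hf2 : ContDiff ℝ 2 (deriv f) := (contDiff_succ_iff_deriv.mp hf3).2.2
  have hdf' : Differentiable ℝ (deriv f) := hf2.differentiable (by norm_num)
  -- f' > 0 on (0, ∞)
  have hf''pos : ∀ t ≥ (0:ℝ), 0 < deriv (deriv f) t := by
    intro t ht
    rw [hode t ht]
    have := Real.rpow_pos_of_pos (hfpos t ht) (-α - 1)
    positivity
  have hmono : StrictMonoOn (deriv f) (Set.Ici (0:ℝ)) := by
    apply strictMonoOn_of_deriv_pos (convex_Ici 0) (hdf'.continuous.continuousOn)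
    intro x hx
    rw [interior_Ici] at hx
    exact hf''pos x (le_of_lt hx)
  intro t ht
  have ht0 : (0:ℝ) ≤ t := le_of_lt ht
  have hfD : 0 < deriv f t := by
    have := hmono (Set.self_mem_Ici) (Set.mem_Ici.mpr ht0) ht
    rwa [hf'0] at this
  have hftpos : 0 < f t := hfpos t ht0
  -- the RHS of the ODE
  set g : ℝ → ℝ := fun s => (α / 2) * f s ^ (-α - 1) with hg
  have hgev : deriv (deriv f) =ᶠ[nhds t] g := by
    filter_upwards [Ioi_mem_nhds ht] with s hs
    exact hode s (le_of_lt (Set.mem_Ioi.mp hs))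
  have hgderiv : HasDerivAt g ((α / 2) * (deriv f t * (-α - 1) * f t ^ (-α - 1 - 1))) t := by
    exact (((hdf t).hasDerivAt).rpow_const (Or.inl (ne_of_gt hftpos))).const_mul (α / 2)
  have hd3 : deriv (deriv (deriv f)) t
      = (α / 2) * (deriv f t * (-α - 1) * f t ^ (-α - 1 - 1)) := by
    rw [hgev.deriv_eq]
    exact hgderiv.deriv
  have hdf2at : DifferentiableAt ℝ (deriv (deriv f)) t :=
    hgderiv.differentiableAt.congr_of_eventuallyEq hgev
  -- compute h' and h''
  have hh1 : deriv h = fun s => (2 / α) * deriv (deriv f) s := by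
    funext s
    rw [hh]
    exact deriv_const_mul _ (hdf' s)
  have hh2 : deriv (deriv h) t = (2 / α) * deriv (deriv (deriv f)) t := by
    rw [hh1]
    exact deriv_const_mul _ hdf2at
  have hht : h t = (2 / α) * deriv f t := by rw [hh]
  -- rpow arithmetic
  have hP : f t ^ (-α - 1) = f t ^ (-α - 1 - 1) * f t := by
    rw [show (-α - 1 : ℝ) = (-α - 1 - 1) + 1 by ring, Real.rpow_add hftpos, Real.rpow_one]
    norm_num
  have hPpos : 0 < f t ^ (-α - 1 - 1) := Real.rpow_pos_of_pos hftpos _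
  -- main computation
  rw [hh2, hd3, hht, hode t ht0, hP]
  have key : -((m : ℝ) - 1) * (2 / α * (α / 2 * (deriv f t * (-α - 1) * f t ^ (-α - 1 - 1)))) /
        (2 / α * deriv f t) - (n:ℝ) * (α / 2 * (f t ^ (-α - 1 - 1) * f t)) / f t
      = (α / 2) * f t ^ (-α - 1 - 1) * (((m:ℝ) - 1) * (α + 1) - (n:ℝ)) := by
    field_simp
    ring
  rw [key]
  have hcoef : ((m:ℝ) - 1) * (α + 1) - (n:ℝ) = ((m:ℝ) - 2) * ((n:ℝ) + (m:ℝ) - 1) / m := by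
    rw [hα]; field_simp; ring
  rw [hcoef]
  have hm2 : (2:ℝ) ≤ (m:ℝ) := by exact_mod_cast hm
  have h1 : (0:ℝ) ≤ (m:ℝ) - 2 := by linarith
  have h2 : (0:ℝ) ≤ (n:ℝ) + (m:ℝ) - 1 := by linarith
  positivity
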